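/- Every unital associative commutative algebra structure on ℂ² is isomorphic (as a unital algebra) either to the product algebra ℂ × ℂ (componentwise multiplication) or to the dual numbers algebra ℂ[X]/(X²). -/

import Mathlib

open Module Submodule

/-- Every unital associative commutative complex algebra of dimension 2 (i.e. an algebra
structure on `ℂ²`) is isomorphic as a unital algebra either to the product algebra `ℂ × ℂ`
or to the dual numbers `ℂ[X]/(X²)`. -/
theorem stmt0 (A : Type) [CommRing A] [Algebra ℂ A]
    (h : Module.finrank ℂ A = 2) :
    Nonempty (A ≃ₐ[ℂ] (ℂ × ℂ)) ∨ Nonempty (A ≃ₐ[ℂ] DualNumber ℂ) := by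
  have hA : FiniteDimensional ℂ A := FiniteDimensional.of_finrank_eq_succ h
  have hnt : Nontrivial A := Module.nontrivial_of_finrank_pos (by rw [h]; norm_num)
  set f : ℂ →+* A := algebraMap ℂ A with hf
  -- find x ∉ span {1}
  obtain ⟨x, hx⟩ : ∃ x : A, x ∉ Submodule.span ℂ {(1 : A)} := by
    by_contra hcon
    push_neg at hcon
    have htop : Submodule.span ℂ {(1 : A)} = ⊤ := eq_top_iff'.mpr hcon
    have h1 : finrank ℂ (Submodule.span ℂ {(1 : A)}) = 1 :=
      finrank_span_singleton (one_ne_zero)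
    rw [htop, finrank_top, h] at h1
    norm_num at h1
  -- 1 and x are linearly independent
  have hind : ∀ a b : ℂ, a • (1 : A) + b • x = 0 → a = 0 ∧ b = 0 := by
    intro a b hab
    have hb : b = 0 := by
      by_contra hb
      apply hx
      have h2 : b • x = -(a • (1 : A)) := eq_neg_of_add_eq_zero_right hab
      have h3 : x = (b⁻¹ * -a) • (1 : A) := by
        rw [mul_smul, show (-a : ℂ) • (1 : A) = -(a • 1) from neg_smul a 1, ← h2,
          inv_smul_smul₀ hb]
      rw [h3]
      exact Submodule.smul_mem _ _ (Submodule.mem_span_singleton_self _)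
    rw [hb, zero_smul, add_zero] at hab
    exact ⟨(smul_eq_zero.mp hab).resolve_right one_ne_zero, hb⟩
  have li : LinearIndependent ℂ ![(1 : A), x] := LinearIndependent.pair_iff.mpr hind
  have hspan : Submodule.span ℂ {(1 : A), x} = ⊤ := by
    apply Submodule.eq_top_of_finrank_eq
    have hrange : Set.range ![(1 : A), x] = {1, x} := by
      simp [Matrix.range_cons, Matrix.range_empty, Set.pair_comm]
    rw [← hrange, finrank_span_eq_card li, h]
    simp
  obtain ⟨s, t, hst⟩ := Submodule.mem_span_pair.mp
    (hspan ▸ Submodule.mem_top : x * x ∈ Submodule.span ℂ {(1 : A), x})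
  -- hst : s • 1 + t • x = x * x
  set y : A := x - (t / 2) • (1 : A) with hy
  set c : ℂ := s + t ^ 2 / 4 with hcdef
  have hst' : f s * 1 + f t * x = x * x := by simpa [Algebra.smul_def] using hst
  have key : y * y = f c := by
    have h2 : f t = f (t / 2) + f (t / 2) := by rw [← map_add]; ring_nf
    have h3 : f c = f s + f (t / 2) * f (t / 2) := by
      rw [← map_mul, ← map_add]
      congr 1
      ring
    have hys : y = x - f (t / 2) * 1 := by rw [hy, Algebra.smul_def]
    rw [hys, h3]
    linear_combination -hst' + x * h2
  have hxy : x = y + (t / 2) • (1 : A) := by rw [hy]; abel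
  have hindy : ∀ a b : ℂ, a • (1 : A) + b • y = 0 → a = 0 ∧ b = 0 := by
    intro a b hab
    have h4 : (a - b * (t / 2)) • (1 : A) + b • x = 0 := by
      rw [← hab, hy]
      module
    obtain ⟨ha, hb⟩ := hind _ _ h4
    refine ⟨?_, hb⟩
    rw [hb] at ha
    simpa using ha
  have hspany : Submodule.span ℂ {(1 : A), y} = ⊤ := by
    rw [eq_top_iff, ← hspan, Submodule.span_le]
    rintro z hz
    simp only [Set.mem_insert_iff, Set.mem_singleton_iff] at hz
    have h1m : (1 : A) ∈ Submodule.span ℂ {(1 : A), y} :=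
      Submodule.subset_span (by simp)
    have hym : y ∈ Submodule.span ℂ {(1 : A), y} :=
      Submodule.subset_span (by simp)
    rcases hz with rfl | rfl
    · exact h1m
    · rw [hxy]
      exact Submodule.add_mem _ hym (Submodule.smul_mem _ _ h1m)
  by_cases hc : c = 0
  · -- dual numbers case
    right
    have hy2 : y * y = 0 := by rw [key, hc, map_zero]
    let φ : DualNumber ℂ →ₐ[ℂ] A :=
      DualNumber.lift ⟨(Algebra.ofId ℂ A, y), by simpa using hy2, fun a => Commute.all _ _⟩
    have hsurj : Function.Surjective φ := by
      have hle : Submodule.span ℂ {(1 : A), y} ≤ Subalgebra.toSubmodule φ.range := by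
        rw [Submodule.span_le]
        rintro z hz
        simp only [Set.mem_insert_iff, Set.mem_singleton_iff] at hz
        rcases hz with rfl | rfl
        · exact ⟨1, map_one φ⟩
        · exact ⟨DualNumber.eps, by simp [φ]⟩
      intro z
      exact hle (hspany ▸ Submodule.mem_top)
    have hinj : Function.Injective φ := by
      rw [injective_iff_map_eq_zero]
      intro z hz
      rw [show φ z = Algebra.ofId ℂ A z.fst + Algebra.ofId ℂ A z.snd * y from
        DualNumber.lift_apply_apply _ z] at hz
      have h5 := hindy z.fst z.snd (by
        rw [Algebra.smul_def, Algebra.smul_def]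
        simpa [Algebra.ofId_apply] using hz)
      exact TrivSqZeroExt.ext h5.1 h5.2
    exact ⟨(AlgEquiv.ofBijective φ ⟨hinj, hsurj⟩).symm⟩
  · -- split case : A ≃ ℂ × ℂ
    left
    obtain ⟨r, hr⟩ := IsAlgClosed.exists_pow_nat_eq c zero_lt_two
    have hr0 : r ≠ 0 := by
      intro h0
      apply hc
      rw [← hr, h0]
      ring
    set e : A := (1 / 2 : ℂ) • (1 : A) + (1 / (2 * r)) • y with he_def
    have he_alg : e = f (1 / 2) * 1 + f (1 / (2 * r)) * y := by
      rw [he_def, Algebra.smul_def, Algebra.smul_def]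
    have he : e * e = e := by
      have H1 : f (1 / 2) * f (1 / 2) + f (1 / (2 * r)) * f (1 / (2 * r)) * f c
          = f (1 / 2) := by
        rw [← map_mul, ← map_mul, ← map_mul, ← map_add]
        congr 1
        field_simp
        linear_combination -hr
      have H2 : f (1 / 2) + f (1 / 2) = 1 := by
        rw [← map_add, show (1 / 2 : ℂ) + 1 / 2 = 1 by norm_num, map_one]
      rw [he_alg]
      linear_combination f (1 / (2 * r)) * f (1 / (2 * r)) * key + H1
        + (f (1 / (2 * r)) * y) * H2
    let φ : (ℂ × ℂ) →ₐ[ℂ] A :=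
      { toFun := fun p => f p.1 * e + f p.2 * (1 - e)
        map_one' := by simp only [Prod.fst_one, Prod.snd_one, map_one]; ring
        map_mul' := by
          intro p q
          simp only [Prod.fst_mul, Prod.snd_mul, map_mul]
          linear_combination (f p.1 * f q.2 + f p.2 * f q.1
            - f p.1 * f q.1 - f p.2 * f q.2) * he
        map_zero' := by simp
        map_add' := by
          intro p q
          simp only [Prod.fst_add, Prod.snd_add, map_add]
          ring
        commutes' := by
          intro a
          have : algebraMap ℂ (ℂ × ℂ) a = (a, a) := rfl
          rw [this]
          show f a * e + f a * (1 - e) = algebraMap ℂ A a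
          ring }
    have hsurj : Function.Surjective φ := by
      have h1r : (1 : A) ∈ Subalgebra.toSubmodule φ.range := ⟨1, map_one φ⟩
      have her : e ∈ Subalgebra.toSubmodule φ.range := by
        refine ⟨(1, 0), ?_⟩
        show f 1 * e + f 0 * (1 - e) = e
        simp
      have hyr : y ∈ Subalgebra.toSubmodule φ.range := by
        have hy_eq : y = (2 * r) • e - r • (1 : A) := by
          rw [he_def, smul_add, smul_smul, smul_smul,
            show (2 * r) * (1 / (2 * r)) = 1 by field_simp,
            show (2 * r) * (1 / 2) = r by ring, one_smul]
          abel
        rw [hy_eq]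
        exact Submodule.sub_mem _ (Submodule.smul_mem _ _ her) (Submodule.smul_mem _ _ h1r)
      have hle : Submodule.span ℂ {(1 : A), y} ≤ Subalgebra.toSubmodule φ.range := by
        rw [Submodule.span_le]
        rintro z hz
        simp only [Set.mem_insert_iff, Set.mem_singleton_iff] at hz
        rcases hz with rfl | rfl
        · exact h1r
        · exact hyr
      intro z
      exact hle (hspany ▸ Submodule.mem_top)
    have hinj : Function.Injective φ := by
      have hfr : finrank ℂ (ℂ × ℂ) = finrank ℂ A := by
        rw [h, Module.finrank_prod, Module.finrank_self]
      exact (LinearMap.injective_iff_surjective_of_finrank_eq_finrank hfr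
        (f := φ.toLinearMap)).mpr hsurj
    exact ⟨(AlgEquiv.ofBijective φ ⟨hinj, hsurj⟩).symm⟩
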